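/- Let E be a group, let z ∈ E be a central element of infinite order, let Z = ⟨z⟩, let π : E → G := E/Z be the quotient homomorphism, let s : G → E be a set-theoretic section of π, and let ω : G × G → ℤ be the function determined by s(g)·s(h) = z^{ω(g,h)}·s(gh) for all g, h ∈ G. If there exists a subgroup H ≤ E with H ∩ Z = {1} such that the subgroup H·Z has finite index in E, then there exists a function f : G → ℚ such that ω(g,h) = f(g) + f(h) − f(gh) in ℚ for all g, h ∈ G. -/

import Mathlib

/-- If the central extension `1 → ⟨z⟩ → E → G := E/⟨z⟩ → 1` (with `z` central of
infinite order) virtually splits, then the associated integral 2-cocycle `ω` (determined by a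
set-theoretic section `s` via `s g * s h = z ^ ω g h * s (g * h)`) becomes a coboundary with
rational coefficients. -/
theorem virtually_split_central_extension_rational_coboundary
    {E : Type*} [Group E] (z : E) (hz : z ∈ Subgroup.center E)
    (hord : ¬ IsOfFinOrder z) :
    haveI : (Subgroup.zpowers z).Normal :=
      ⟨fun n hn g => by
        obtain ⟨k, rfl⟩ := Subgroup.mem_zpowers_iff.mp hn
        exact Subgroup.mem_zpowers_iff.mpr
          ⟨k, by rw [Subgroup.mem_center_iff.mp (Subgroup.zpow_mem _ hz k) g,
            mul_inv_cancel_right]⟩⟩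
    ∀ (s : E ⧸ Subgroup.zpowers z → E),
      (∀ g : E ⧸ Subgroup.zpowers z, QuotientGroup.mk (s g) = g) →
      ∀ (ω : E ⧸ Subgroup.zpowers z → E ⧸ Subgroup.zpowers z → ℤ),
        (∀ g h, s g * s h = z ^ ω g h * s (g * h)) →
        (∃ H : Subgroup E, H ⊓ Subgroup.zpowers z = ⊥ ∧
            (H ⊔ Subgroup.zpowers z).FiniteIndex) →
        ∃ f : E ⧸ Subgroup.zpowers z → ℚ,
          ∀ g h, (ω g h : ℚ) = f g + f h - f (g * h) := by
  intro s hs ω hω hsplit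
  obtain ⟨H, hHZ, hfin⟩ := hsplit
  haveI : (Subgroup.zpowers z).Normal :=
    ⟨fun n hn g => by
      obtain ⟨k, rfl⟩ := Subgroup.mem_zpowers_iff.mp hn
      exact Subgroup.mem_zpowers_iff.mpr
        ⟨k, by rw [Subgroup.mem_center_iff.mp (Subgroup.zpow_mem _ hz k) g,
          mul_inv_cancel_right]⟩⟩
  haveI : (H ⊔ Subgroup.zpowers z).FiniteIndex := hfin
  -- z commutes with everything
  have hcommp : ∀ (n : ℤ) (e : E), z ^ n * e = e * z ^ n := fun n e =>
    (Subgroup.mem_center_iff.mp (Subgroup.zpow_mem _ hz n) e).symm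
  -- existence of decomposition
  have hex : ∀ k : (H ⊔ Subgroup.zpowers z : Subgroup E),
      ∃ n : ℤ, ∃ h ∈ H, (k : E) = h * z ^ n := by
    rintro ⟨k, hk⟩
    have : k ∈ (↑(H ⊔ Subgroup.zpowers z) : Set E) := hk
    rw [Subgroup.mul_normal H (Subgroup.zpowers z)] at this
    obtain ⟨h, hh, v, hv, rfl⟩ := this
    obtain ⟨n, rfl⟩ := Subgroup.mem_zpowers_iff.mp hv
    exact ⟨n, h, hh, rfl⟩
  -- uniqueness of exponent
  have huniq : ∀ (h₁ h₂ : E), h₁ ∈ H → h₂ ∈ H → ∀ (a b : ℤ),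
      h₁ * z ^ a = h₂ * z ^ b → a = b := by
    intro h₁ h₂ hh₁ hh₂ a b hab
    have h0 : h₁ * z ^ a * (z ^ a)⁻¹ = h₂ * z ^ b * (z ^ a)⁻¹ := by rw [hab]
    simp only [mul_inv_cancel_right] at h0
    have h1 : h₂⁻¹ * h₁ = z ^ (b - a) := by
      rw [h0, zpow_sub]
      group
    have hmem : z ^ (b - a) ∈ H ⊓ Subgroup.zpowers z := by
      constructor
      · rw [← h1]; exact H.mul_mem (H.inv_mem hh₂) hh₁
      · exact Subgroup.zpow_mem _ (Subgroup.mem_zpowers z) _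
    rw [hHZ, Subgroup.mem_bot] at hmem
    have hinj := injective_zpow_iff_not_isOfFinOrder.mpr hord
    have h2 : z ^ (b - a) = z ^ (0 : ℤ) := by simpa using hmem
    have := hinj h2
    omega
  -- the exponent function on K
  choose w h' hh' hdec using hex
  have hwspec : ∀ (k : (H ⊔ Subgroup.zpowers z : Subgroup E)) (h : E), h ∈ H →
      ∀ a : ℤ, (k : E) = h * z ^ a → w k = a := by
    intro k h hh a ha
    exact huniq _ _ (hh' k) hh (w k) a (by rw [← hdec k, ← ha])
  have hw_mul : ∀ k₁ k₂ : (H ⊔ Subgroup.zpowers z : Subgroup E),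
      w (k₁ * k₂) = w k₁ + w k₂ := by
    intro k₁ k₂
    refine hwspec (k₁ * k₂) (h' k₁ * h' k₂) (H.mul_mem (hh' k₁) (hh' k₂)) _ ?_
    push_cast
    rw [hdec k₁, hdec k₂, zpow_add]
    calc h' k₁ * z ^ w k₁ * (h' k₂ * z ^ w k₂)
        = h' k₁ * (z ^ w k₁ * h' k₂) * z ^ w k₂ := by group
      _ = h' k₁ * (h' k₂ * z ^ w k₁) * z ^ w k₂ := by rw [hcommp]
      _ = h' k₁ * h' k₂ * (z ^ w k₁ * z ^ w k₂) := by group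
  let φ : (H ⊔ Subgroup.zpowers z : Subgroup E) →* Multiplicative ℚ :=
    { toFun := fun k => Multiplicative.ofAdd ((w k : ℚ))
      map_one' := by
        have h1 : w 1 = 0 := hwspec 1 1 H.one_mem 0 (by simp)
        show Multiplicative.ofAdd ((w 1 : ℚ)) = 1
        simp [h1]
      map_mul' := by
        intro a b
        show Multiplicative.ofAdd ((w (a * b) : ℚ)) =
          Multiplicative.ofAdd ((w a : ℚ)) * Multiplicative.ofAdd ((w b : ℚ))
        rw [hw_mul a b]
        push_cast
        rw [ofAdd_add] }
  let T : E →* Multiplicative ℚ := MonoidHom.transfer φ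
  -- value of transfer on z
  have hTz : T z = Multiplicative.ofAdd (((H ⊔ Subgroup.zpowers z).index : ℚ)) := by
    have key : ∀ (k : ℕ) (g₀ : E), g₀⁻¹ * z ^ k * g₀ ∈ (H ⊔ Subgroup.zpowers z) →
        g₀⁻¹ * z ^ k * g₀ = z ^ k := by
      intro k g₀ _
      have h3 : z ^ (k : ℤ) * g₀ = g₀ * z ^ (k : ℤ) := hcommp k g₀
      rw [zpow_natCast] at h3
      rw [mul_assoc, h3, ← mul_assoc, inv_mul_cancel, one_mul]
    rw [show T z = φ ⟨z ^ (H ⊔ Subgroup.zpowers z).index,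
        MonoidHom.transfer_eq_pow_aux z key⟩ from MonoidHom.transfer_eq_pow φ z key]
    have hwval : w ⟨z ^ (H ⊔ Subgroup.zpowers z).index,
        MonoidHom.transfer_eq_pow_aux z key⟩ = ((H ⊔ Subgroup.zpowers z).index : ℤ) := by
      refine hwspec _ 1 H.one_mem _ ?_
      simp [zpow_natCast]
    show Multiplicative.ofAdd ((w _ : ℚ)) = _
    rw [hwval]
    push_cast
    rfl
  have hn : (((H ⊔ Subgroup.zpowers z).index : ℚ)) ≠ 0 := by
    exact_mod_cast Subgroup.FiniteIndex.index_ne_zero (H := H ⊔ Subgroup.zpowers z)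
  -- F : E → ℚ
  set F : E → ℚ :=
    fun e => Multiplicative.toAdd (T e) / ((H ⊔ Subgroup.zpowers z).index : ℚ) with hF
  have hFmul : ∀ a b : E, F (a * b) = F a + F b := by
    intro a b
    simp only [hF, map_mul, toAdd_mul]
    ring
  have hFzpow : ∀ n : ℤ, F (z ^ n) = n := by
    intro n
    simp only [hF, map_zpow, toAdd_zpow, hTz, toAdd_ofAdd]
    field_simp
    rw [zsmul_eq_mul]; ring
  refine ⟨fun g => F (s g), fun g h => ?_⟩
  have h2 : F (s g * s h) = F (z ^ ω g h * s (g * h)) := by rw [hω g h]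
  rw [hFmul, hFmul, hFzpow] at h2
  simp only []
  linarith
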